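/- Define the ultrametric Gromov–Hausdorff distance between compact ultrametric spaces X and Y as ρ_GHu(X,Y) = inf { d_H(i(X), j(Y)) : i : X → Z and j : Y → Z isometric embeddings into an ultrametric space Z }. Then ρ_GHu satisfies the strong triangle inequality ρ_GHu(X₁,X₃) ≤ max(ρ_GHu(X₁,X₂), ρ_GHu(X₂,X₃)) for all compact ultrametric spaces X₁, X₂, X₃. -/

import Mathlib

open Metric

section UGlue

set_option linter.unusedSectionVars false

variable {K Z W : Type} [MetricSpace K] [MetricSpace Z] [MetricSpace W]
  [CompactSpace K] [Nonempty K]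
  [IsUltrametricDist Z] [IsUltrametricDist W]

/-- Cross distance for the ultrametric gluing of `Z` and `W` along `K`. -/
noncomputable def uCross (i : K → Z) (j : K → W) (z : Z) (w : W) : ℝ :=
  ⨅ p : K, max (dist z (i p)) (dist (j p) w)

lemma uCross_le (i : K → Z) (j : K → W) (z : Z) (w : W) (p : K) :
    uCross i j z w ≤ max (dist z (i p)) (dist (j p) w) :=
  ciInf_le ⟨0, by rintro r ⟨q, rfl⟩; positivity⟩ p

lemma uCross_nonneg (i : K → Z) (j : K → W) (z : Z) (w : W) :
    0 ≤ uCross i j z w :=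
  le_ciInf fun _ => le_max_of_le_left dist_nonneg

lemma uCross_swap (i : K → Z) (j : K → W) (z : Z) (w : W) :
    uCross j i w z = uCross i j z w :=
  iInf_congr fun p => by rw [dist_comm w (j p), dist_comm (i p) z, max_comm]

lemma uCross_exists_min {i : K → Z} {j : K → W} (hi : Isometry i) (hj : Isometry j)
    (z : Z) (w : W) :
    ∃ p : K, uCross i j z w = max (dist z (i p)) (dist (j p) w) := by
  have hf : Continuous fun p : K => max (dist z (i p)) (dist (j p) w) :=
    (continuous_const.dist hi.continuous).max (hj.continuous.dist continuous_const)
  obtain ⟨p, -, hp⟩ := isCompact_univ.exists_isMinOn Set.univ_nonempty hf.continuousOn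
  exact ⟨p, le_antisymm (uCross_le i j z w p) (le_ciInf fun q => hp (Set.mem_univ q))⟩

variable (i : K → Z) (j : K → W)

/-- The glued distance on `Z ⊕ W`. -/
noncomputable def uGlueDist : Z ⊕ W → Z ⊕ W → ℝ
  | .inl z, .inl z' => dist z z'
  | .inl z, .inr w => uCross i j z w
  | .inr w, .inl z => uCross i j z w
  | .inr w, .inr w' => dist w w'

lemma uGlueDist_self (x : Z ⊕ W) : uGlueDist i j x x = 0 := by
  cases x <;> simp [uGlueDist]

lemma uGlueDist_comm (x y : Z ⊕ W) : uGlueDist i j x y = uGlueDist i j y x := by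
  cases x <;> cases y <;> simp [uGlueDist, dist_comm]

lemma uGlueDist_nonneg (x y : Z ⊕ W) : 0 ≤ uGlueDist i j x y := by
  cases x <;> cases y <;>
    first
      | exact dist_nonneg
      | exact uCross_nonneg i j _ _

lemma uGlueDist_swap (x y : Z ⊕ W) :
    uGlueDist j i x.swap y.swap = uGlueDist i j x y := by
  cases x <;> cases y <;> simp [uGlueDist, uCross_swap, dist_comm]

variable {i j}

lemma uGlueDist_triangle_aux (hi : Isometry i) (hj : Isometry j) (a : Z) (y z : Z ⊕ W) :
    uGlueDist i j (.inl a) z ≤ max (uGlueDist i j (.inl a) y) (uGlueDist i j y z) := by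
  cases y with
  | inl b =>
    cases z with
    | inl c => exact dist_triangle_max a b c
    | inr c =>
      -- a, b ∈ Z, c ∈ W
      obtain ⟨p, hp⟩ := uCross_exists_min hi hj b c
      show uCross i j a c ≤ max (dist a b) (uCross i j b c)
      rw [hp]
      refine (uCross_le i j a c p).trans (max_le ?_ ?_)
      · exact (dist_triangle_max a b (i p)).trans
          (max_le (le_max_left _ _) (le_max_of_le_right (le_max_left _ _)))
      · exact le_max_of_le_right (le_max_right _ _)
  | inr b =>
    obtain ⟨p, hp⟩ := uCross_exists_min hi hj a b
    cases z with
    | inl c =>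
      -- a ∈ Z, b ∈ W, c ∈ Z
      obtain ⟨q, hq⟩ := uCross_exists_min hi hj c b
      show dist a c ≤ max (uCross i j a b) (uCross i j c b)
      rw [hp, hq]
      set M := max (max (dist a (i p)) (dist (j p) b)) (max (dist c (i q)) (dist (j q) b))
        with hM
      have hA : dist a (i p) ≤ M := le_max_of_le_left (le_max_left _ _)
      have hB : dist (i p) (i q) ≤ M := by
        rw [hi.dist_eq, ← hj.dist_eq]
        refine (dist_triangle_max (j p) b (j q)).trans (max_le ?_ ?_)
        · exact le_max_of_le_left (le_max_right _ _)
        · rw [dist_comm]; exact le_max_of_le_right (le_max_right _ _)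
      have hC : dist (i q) c ≤ M := by
        rw [dist_comm]; exact le_max_of_le_right (le_max_left _ _)
      calc dist a c ≤ max (dist a (i p)) (dist (i p) c) := dist_triangle_max _ _ _
        _ ≤ max (dist a (i p)) (max (dist (i p) (i q)) (dist (i q) c)) :=
            max_le_max le_rfl (dist_triangle_max _ _ _)
        _ ≤ M := max_le hA (max_le hB hC)
    | inr c =>
      -- a ∈ Z, b, c ∈ W
      show uCross i j a c ≤ max (uCross i j a b) (dist b c)
      rw [hp]
      refine (uCross_le i j a c p).trans (max_le ?_ ?_)
      · exact le_max_of_le_left (le_max_left _ _)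
      · exact (dist_triangle_max (j p) b c).trans
          (max_le (le_max_of_le_left (le_max_right _ _)) (le_max_right _ _))

lemma uGlueDist_triangle_max (hi : Isometry i) (hj : Isometry j) (x y z : Z ⊕ W) :
    uGlueDist i j x z ≤ max (uGlueDist i j x y) (uGlueDist i j y z) := by
  cases x with
  | inl a => exact uGlueDist_triangle_aux hi hj a y z
  | inr a =>
    have h := uGlueDist_triangle_aux hj hi a y.swap z.swap
    rwa [show (Sum.inl a : W ⊕ Z) = (Sum.inr a : Z ⊕ W).swap from rfl,
      uGlueDist_swap, uGlueDist_swap, uGlueDist_swap] at h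

/-- The ultrametric gluing pseudometric on `Z ⊕ W`. -/
noncomputable def uGluePremetric (hi : Isometry i) (hj : Isometry j) :
    PseudoMetricSpace (Z ⊕ W) where
  dist := uGlueDist i j
  dist_self := uGlueDist_self i j
  dist_comm := uGlueDist_comm i j
  dist_triangle x y z := (uGlueDist_triangle_max hi hj x y z).trans
    (max_le (le_add_of_nonneg_right (uGlueDist_nonneg i j y z))
      (le_add_of_nonneg_left (uGlueDist_nonneg i j x y)))

/-- The ultrametric glue space. -/
def UGlueSpace (hi : Isometry i) (hj : Isometry j) : Type :=
  @SeparationQuotient _ (uGluePremetric hi hj).toUniformSpace.toTopologicalSpace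

noncomputable instance UGlueSpace.metricSpace (hi : Isometry i) (hj : Isometry j) :
    MetricSpace (UGlueSpace hi hj) :=
  @SeparationQuotient.instMetricSpace _ (uGluePremetric hi hj)

instance UGlueSpace.ultra (hi : Isometry i) (hj : Isometry j) :
    IsUltrametricDist (UGlueSpace hi hj) := by
  constructor
  have hs := (@SeparationQuotient.surjective_mk _
    (uGluePremetric hi hj).toUniformSpace.toTopologicalSpace)
  refine hs.forall.2 fun x => hs.forall.2 fun y => hs.forall.2 fun z => ?_
  exact uGlueDist_triangle_max hi hj x y z

/-- Left embedding into the glue space. -/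
noncomputable def toUGlueL (hi : Isometry i) (hj : Isometry j) (z : Z) :
    UGlueSpace hi hj :=
  @SeparationQuotient.mk _ (uGluePremetric hi hj).toUniformSpace.toTopologicalSpace (.inl z)

/-- Right embedding into the glue space. -/
noncomputable def toUGlueR (hi : Isometry i) (hj : Isometry j) (w : W) :
    UGlueSpace hi hj :=
  @SeparationQuotient.mk _ (uGluePremetric hi hj).toUniformSpace.toTopologicalSpace (.inr w)

lemma dist_toUGlueL (hi : Isometry i) (hj : Isometry j) (z z' : Z) :
    dist (toUGlueL hi hj z) (toUGlueL hi hj z') = dist z z' := by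
  letI := uGluePremetric hi hj
  exact SeparationQuotient.dist_mk _ _

lemma dist_toUGlueR (hi : Isometry i) (hj : Isometry j) (w w' : W) :
    dist (toUGlueR hi hj w) (toUGlueR hi hj w') = dist w w' := by
  letI := uGluePremetric hi hj
  exact SeparationQuotient.dist_mk _ _

lemma dist_toUGlueLR (hi : Isometry i) (hj : Isometry j) (z : Z) (w : W) :
    dist (toUGlueL hi hj z) (toUGlueR hi hj w) = uCross i j z w := by
  letI := uGluePremetric hi hj
  exact SeparationQuotient.dist_mk _ _

lemma isometry_toUGlueL (hi : Isometry i) (hj : Isometry j) :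
    Isometry (toUGlueL hi hj) :=
  Isometry.of_dist_eq (dist_toUGlueL hi hj)

lemma isometry_toUGlueR (hi : Isometry i) (hj : Isometry j) :
    Isometry (toUGlueR hi hj) :=
  Isometry.of_dist_eq (dist_toUGlueR hi hj)

end UGlue

/-- Key construction: given `X` and the gluing core `K` embedded in an ultrametric `Z`, and
`K`, `Y` embedded in an ultrametric `W`, there is a common ultrametric space containing `X`
and `Y` whose Hausdorff distance is at most the max of the two given Hausdorff distances. -/
lemma GHu_aux {X Y K : Type} [MetricSpace X] [MetricSpace Y] [MetricSpace K]
    [CompactSpace X] [CompactSpace Y] [CompactSpace K]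
    [Nonempty X] [Nonempty Y] [Nonempty K]
    {Z W : Type} [MetricSpace Z] [MetricSpace W] [IsUltrametricDist Z] [IsUltrametricDist W]
    {iX : X → Z} {iK : K → Z} {jK : K → W} {jY : Y → W}
    (hiX : Isometry iX) (hiK : Isometry iK) (hjK : Isometry jK) (hjY : Isometry jY) :
    ∃ r ∈ { r : ℝ | ∃ (V : Type) (_ : MetricSpace V), IsUltrametricDist V ∧
      ∃ (i : X → V) (j : Y → V), Isometry i ∧ Isometry j ∧
        Metric.hausdorffDist (Set.range i) (Set.range j) = r },
      r ≤ max (Metric.hausdorffDist (Set.range iX) (Set.range iK))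
              (Metric.hausdorffDist (Set.range jK) (Set.range jY)) := by
  set a := Metric.hausdorffDist (Set.range iX) (Set.range iK) with ha
  set b := Metric.hausdorffDist (Set.range jK) (Set.range jY) with hb
  set G := UGlueSpace hiK hjK
  set f : X → G := fun x => toUGlueL hiK hjK (iX x) with hf
  set g : Y → G := fun y => toUGlueR hiK hjK (jY y) with hg
  have hfI : Isometry f := (isometry_toUGlueL hiK hjK).comp hiX
  have hgI : Isometry g := (isometry_toUGlueR hiK hjK).comp hjY
  refine ⟨Metric.hausdorffDist (Set.range f) (Set.range g),
    ⟨G, inferInstance, inferInstance, f, g, hfI, hgI, rfl⟩, ?_⟩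
  -- compactness facts
  have hcX : IsCompact (Set.range iX) := isCompact_range hiX.continuous
  have hcKZ : IsCompact (Set.range iK) := isCompact_range hiK.continuous
  have hcKW : IsCompact (Set.range jK) := isCompact_range hjK.continuous
  have hcY : IsCompact (Set.range jY) := isCompact_range hjY.continuous
  have hne1 : EMetric.hausdorffEdist (Set.range iX) (Set.range iK) ≠ ⊤ :=
    Metric.hausdorffEdist_ne_top_of_nonempty_of_bounded (Set.range_nonempty _)
      (Set.range_nonempty _) hcX.isBounded hcKZ.isBounded
  have hne2 : EMetric.hausdorffEdist (Set.range jK) (Set.range jY) ≠ ⊤ :=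
    Metric.hausdorffEdist_ne_top_of_nonempty_of_bounded (Set.range_nonempty _)
      (Set.range_nonempty _) hcKW.isBounded hcY.isBounded
  refine Metric.hausdorffDist_le_of_mem_dist
    (le_max_of_le_left Metric.hausdorffDist_nonneg) ?_ ?_
  · rintro u ⟨x, rfl⟩
    -- find p : K close to iX x
    have h1 : Metric.infDist (iX x) (Set.range iK) ≤ a :=
      Metric.infDist_le_hausdorffDist_of_mem ⟨x, rfl⟩ hne1
    obtain ⟨_, ⟨p, rfl⟩, hp⟩ := hcKZ.exists_infDist_eq_dist (Set.range_nonempty _) (iX x)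
    have h2 : Metric.infDist (jK p) (Set.range jY) ≤ b :=
      Metric.infDist_le_hausdorffDist_of_mem ⟨p, rfl⟩ hne2
    obtain ⟨_, ⟨y, rfl⟩, hy⟩ := hcY.exists_infDist_eq_dist (Set.range_nonempty _) (jK p)
    refine ⟨g y, ⟨y, rfl⟩, ?_⟩
    have : dist (f x) (g y) = uCross iK jK (iX x) (jY y) := dist_toUGlueLR _ _ _ _
    rw [this]
    refine (uCross_le iK jK _ _ p).trans (max_le_max ?_ ?_)
    · rw [← hp]; exact h1
    · rw [← hy]; exact h2
  · rintro u ⟨y, rfl⟩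
    have h1 : Metric.infDist (jY y) (Set.range jK) ≤ b := by
      rw [hb, Metric.hausdorffDist_comm]
      exact Metric.infDist_le_hausdorffDist_of_mem ⟨y, rfl⟩
        (by rw [EMetric.hausdorffEdist_comm]; exact hne2)
    obtain ⟨_, ⟨p, rfl⟩, hp⟩ := hcKW.exists_infDist_eq_dist (Set.range_nonempty _) (jY y)
    have h2 : Metric.infDist (iK p) (Set.range iX) ≤ a := by
      rw [ha, Metric.hausdorffDist_comm]
      exact Metric.infDist_le_hausdorffDist_of_mem ⟨p, rfl⟩
        (by rw [EMetric.hausdorffEdist_comm]; exact hne1)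
    obtain ⟨_, ⟨x, rfl⟩, hx⟩ := hcX.exists_infDist_eq_dist (Set.range_nonempty _) (iK p)
    refine ⟨f x, ⟨x, rfl⟩, ?_⟩
    have : dist (f x) (g y) = uCross iK jK (iX x) (jY y) := dist_toUGlueLR _ _ _ _
    rw [dist_comm, this]
    refine (uCross_le iK jK _ _ p).trans (max_le ?_ ?_)
    · refine le_max_of_le_left ?_
      rw [dist_comm, ← hx]; exact h2
    · refine le_max_of_le_right ?_
      rw [dist_comm, ← hp]; exact h1

/-- The ultrametric Gromov–Hausdorff distance: infimum of Hausdorff distances between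
isometric copies of `X` and `Y` inside a common ultrametric space. -/
noncomputable def GHuDist (X Y : Type*) [MetricSpace X] [MetricSpace Y] : ℝ :=
  sInf { r : ℝ | ∃ (Z : Type) (_ : MetricSpace Z), IsUltrametricDist Z ∧
    ∃ (i : X → Z) (j : Y → Z), Isometry i ∧ Isometry j ∧
      Metric.hausdorffDist (Set.range i) (Set.range j) = r }

lemma GHuSet_bddBelow (X Y : Type) [MetricSpace X] [MetricSpace Y] :
    BddBelow { r : ℝ | ∃ (Z : Type) (_ : MetricSpace Z), IsUltrametricDist Z ∧
      ∃ (i : X → Z) (j : Y → Z), Isometry i ∧ Isometry j ∧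
        Metric.hausdorffDist (Set.range i) (Set.range j) = r } := by
  refine ⟨0, ?_⟩
  rintro r ⟨Z, _, _, i, j, _, _, rfl⟩
  exact Metric.hausdorffDist_nonneg

lemma GHuSet_nonempty (X Y : Type) [MetricSpace X] [MetricSpace Y]
    [CompactSpace X] [CompactSpace Y] [Nonempty X] [Nonempty Y]
    [IsUltrametricDist X] [IsUltrametricDist Y] :
    Set.Nonempty { r : ℝ | ∃ (Z : Type) (_ : MetricSpace Z), IsUltrametricDist Z ∧
      ∃ (i : X → Z) (j : Y → Z), Isometry i ∧ Isometry j ∧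
        Metric.hausdorffDist (Set.range i) (Set.range j) = r } := by
  obtain ⟨x0⟩ := ‹Nonempty X›
  obtain ⟨y0⟩ := ‹Nonempty Y›
  have hiX : Isometry (id : X → X) := isometry_id
  have hjY : Isometry (id : Y → Y) := isometry_id
  have hiK : Isometry (fun _ : PUnit => x0) :=
    Isometry.of_dist_eq fun _ _ => by simp
  have hjK : Isometry (fun _ : PUnit => y0) :=
    Isometry.of_dist_eq fun _ _ => by simp
  obtain ⟨r, hr, -⟩ := GHu_aux hiX hiK hjK hjY
  exact ⟨r, hr⟩

/-- The ultrametric Gromov–Hausdorff distance satisfies the strong triangle inequality. -/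
theorem GHuDist_strong_triangle (X1 X2 X3 : Type) [MetricSpace X1] [MetricSpace X2]
    [MetricSpace X3] [CompactSpace X1] [CompactSpace X2] [CompactSpace X3]
    [Nonempty X1] [Nonempty X2] [Nonempty X3]
    [IsUltrametricDist X1] [IsUltrametricDist X2] [IsUltrametricDist X3] :
    GHuDist X1 X3 ≤ max (GHuDist X1 X2) (GHuDist X2 X3) := by
  refine le_of_forall_pos_le_add fun ε hε => ?_
  have h12 : GHuDist X1 X2 < GHuDist X1 X2 + ε := lt_add_of_pos_right _ hε
  have h23 : GHuDist X2 X3 < GHuDist X2 X3 + ε := lt_add_of_pos_right _ hε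
  obtain ⟨r12, hr12, hr12lt⟩ := exists_lt_of_csInf_lt (GHuSet_nonempty X1 X2) h12
  obtain ⟨r23, hr23, hr23lt⟩ := exists_lt_of_csInf_lt (GHuSet_nonempty X2 X3) h23
  obtain ⟨Z, _, _, i1, i2, hi1, hi2, hZ⟩ := hr12
  obtain ⟨W, _, _, j2, j3, hj2, hj3, hW⟩ := hr23
  obtain ⟨r, hr, hrle⟩ := GHu_aux hi1 hi2 hj2 hj3
  have : GHuDist X1 X3 ≤ r := csInf_le (GHuSet_bddBelow X1 X3) hr
  refine this.trans (hrle.trans ?_)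
  rw [hZ, hW]
  calc max r12 r23 ≤ max (GHuDist X1 X2 + ε) (GHuDist X2 X3 + ε) :=
        max_le_max hr12lt.le hr23lt.le
    _ = max (GHuDist X1 X2) (GHuDist X2 X3) + ε := by rw [max_add_add_right]
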